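/- Let n ≥ 1, N = 2^n, r = 2^s with 0 ≤ s ≤ n, and let the shift satisfy 0 ≤ l < 2^s. Then the periodic state Ψ^n_{l,r} is separable and equals |+⟩^{⊗(n−s)} ⊗ |l⟩^{[s]}: explicitly, Ψ^n_{l,r} x = 1/√(2^{n−s}) if x ≡ l (mod 2^s) and 0 otherwise, which factorizes as Ψ^n_{l,r} x = ∏_{i<n} v i (bit i x) with v i = (1/√2, 1/√2) for i < n−s and, for n−s ≤ i < n, v i the indicator of the corresponding binary digit of l written with s bits. -/

import Mathlib

open scoped BigOperators

noncomputable section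

/-- `bit n i x` is the i-th binary digit of `x`, counted from the most significant. -/
def bit (n : ℕ) (i : Fin n) (x : Fin (2^n)) : Fin 2 :=
  ⟨((x : ℕ) / 2^(n - 1 - (i : ℕ))) % 2, Nat.mod_lt _ (by norm_num)⟩

/-- An n-qubit state is separable if its amplitudes factor as a product over the qubits. -/
def Separable (n : ℕ) (ψ : Fin (2^n) → ℂ) : Prop :=
  ∃ v : Fin n → Fin 2 → ℂ, ∀ x, ψ x = ∏ i, v i (bit n i x)

/-- The periodic state with shift `l` and period `r`:
amplitude `1/√A` at `x = l + i·r` for `0 ≤ i < A`, with `A = ⌈(2^n - l)/r⌉`. -/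
def periodicState (n l r : ℕ) : Fin (2^n) → ℂ := fun x =>
  if ∃ i < (2^n - l + r - 1) / r, (x : ℕ) = l + i * r
  then (1 : ℂ) / Real.sqrt (((2^n - l + r - 1) / r : ℕ)) else 0

/-- Quantum Fourier transform of an n-qubit state. -/
def QFT (n : ℕ) (ψ : Fin (2^n) → ℂ) : Fin (2^n) → ℂ := fun y =>
  (1 / (Real.sqrt (2^n) : ℝ) : ℂ) * ∑ x : Fin (2^n),
    Complex.exp (2 * Real.pi * Complex.I * (x : ℕ) * (y : ℕ) / ((2^n : ℕ) : ℂ)) * ψ x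

/-- The generalized GHZ state. -/
def GHZ (n : ℕ) : Fin (2^n) → ℂ := fun x =>
  if (x : ℕ) = 0 ∨ (x : ℕ) = 2^n - 1 then (1 : ℂ) / Real.sqrt 2 else 0

/-- SLOCC equivalence of two n-qubit states. -/
def SLOCCEquiv (n : ℕ) (ψ φ : Fin (2^n) → ℂ) : Prop :=
  ∃ (g : Fin n → Matrix (Fin 2) (Fin 2) ℂ) (c : ℂ),
    c ≠ 0 ∧ (∀ i, IsUnit (g i)) ∧
    ∀ x, φ x = c * ∑ y : Fin (2^n), (∏ i, g i (bit n i x) (bit n i y)) * ψ y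


lemma sqrt_two_pow (k : ℕ) : Real.sqrt (2^k) = (Real.sqrt 2)^k := by
  induction k with
  | zero => simp
  | succ k ih =>
    rw [pow_succ, pow_succ, Real.sqrt_mul (by positivity), ih]

lemma A_eq (n s l : ℕ) (hs : s ≤ n) (hl : l < 2^s) :
    (2^n - l + 2^s - 1) / 2^s = 2^(n-s) := by
  have h2 : 2^n = 2^(n-s) * 2^s := by rw [← pow_add]; congr 1; omega
  have hle : 2^s ≤ 2^n := Nat.pow_le_pow_right (by norm_num) hs
  have : 2^n - l + 2^s - 1 = (2^s - 1 - l) + 2^(n-s) * 2^s := by omega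
  rw [this, Nat.add_mul_div_right _ _ (Nat.two_pow_pos s),
    Nat.div_eq_of_lt (by omega), Nat.zero_add]

lemma exists_iff (n s l : ℕ) (hs : s ≤ n) (hl : l < 2^s) (x : ℕ) (hx : x < 2^n) :
    (∃ i < 2^(n-s), x = l + i * 2^s) ↔ x % 2^s = l := by
  have h2 : 2^n = 2^(n-s) * 2^s := by rw [← pow_add]; congr 1; omega
  constructor
  · rintro ⟨i, hi, rfl⟩
    simp [Nat.add_mul_mod_self_right, Nat.mod_eq_of_lt hl]
  · intro h
    refine ⟨x / 2^s, ?_, ?_⟩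
    · have h2' : 2^n = 2^s * 2^(n-s) := by rw [h2, Nat.mul_comm]
      exact Nat.div_lt_of_lt_mul (by omega)
    · have h3 := Nat.div_add_mod x (2^s)
      have h4 : 2^s * (x / 2^s) = x / 2^s * 2^s := Nat.mul_comm _ _
      omega

lemma mod_eq_iff_bits (s l x : ℕ) (hl : l < 2^s) :
    x % 2^s = l ↔ ∀ j < s, x / 2^j % 2 = l / 2^j % 2 := by
  have hmodl : l % 2^s = l := Nat.mod_eq_of_lt hl
  constructor
  · intro h j hj
    have tb : x.testBit j = l.testBit j := by
      have h1 := Nat.testBit_mod_two_pow x s j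
      rw [h] at h1
      simp [hj] at h1
      exact h1.symm
    rw [Nat.testBit_eq_decide_div_mod_eq, Nat.testBit_eq_decide_div_mod_eq] at tb
    have hx2 := Nat.mod_lt (x / 2^j) (y := 2) (by norm_num)
    have hl2 := Nat.mod_lt (l / 2^j) (y := 2) (by norm_num)
    simp only [decide_eq_decide] at tb
    omega
  · intro h
    rw [← hmodl]
    apply Nat.eq_of_testBit_eq
    intro j
    rw [Nat.testBit_mod_two_pow, Nat.testBit_mod_two_pow]
    by_cases hj : j < s
    · simp only [hj, decide_true, Bool.true_and]
      rw [Nat.testBit_eq_decide_div_mod_eq, Nat.testBit_eq_decide_div_mod_eq, h j hj]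
    · simp [hj]


/-- for `r = 2^s` and `0 ≤ l < 2^s`, the periodic state equals
`|+⟩^{⊗(n−s)} ⊗ |l⟩^{[s]}` and is separable. -/
theorem stmt_4 (n s l : ℕ) (hn : 1 ≤ n) (hs : s ≤ n) (hl : l < 2^s) :
    (∀ x : Fin (2^n), periodicState n l (2^s) x =
      if (x : ℕ) % 2^s = l then (1 : ℂ) / Real.sqrt (2^(n-s)) else 0) ∧
    (∀ x : Fin (2^n), periodicState n l (2^s) x =
      ∏ i : Fin n,
        (if (i : ℕ) < n - s
         then fun _ : Fin 2 => (1 : ℂ) / Real.sqrt 2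
         else fun b : Fin 2 => if (b : ℕ) = (l / 2^(n-1-(i : ℕ))) % 2 then 1 else 0)
          (bit n i x)) := by
  have hA := A_eq n s l hs hl
  have key : ∀ x : Fin (2^n), periodicState n l (2^s) x =
      if (x : ℕ) % 2^s = l then (1 : ℂ) / Real.sqrt (2^(n-s)) else 0 := by
    intro x
    unfold periodicState
    rw [hA]
    have hiff := exists_iff n s l hs hl x x.isLt
    by_cases hx : (x:ℕ) % 2^s = l
    · rw [if_pos (hiff.mpr hx), if_pos hx]; norm_num
    · rw [if_neg (fun hc => hx (hiff.mp hc)), if_neg hx]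
  refine ⟨key, fun x => ?_⟩
  rw [key x]
  -- compute the product
  have hprod : (∏ i : Fin n,
      (if (i : ℕ) < n - s
       then fun _ : Fin 2 => (1 : ℂ) / Real.sqrt 2
       else fun b : Fin 2 => if (b : ℕ) = (l / 2^(n-1-(i : ℕ))) % 2 then 1 else 0)
        (bit n i x))
      = ((1 : ℂ) / Real.sqrt 2)^(n-s) *
        (if ∀ i : Fin n, ¬((i:ℕ) < n - s) →
            ((bit n i x : ℕ) = (l / 2^(n-1-(i : ℕ))) % 2) then 1 else 0) := by
    have : ∀ i : Fin n,
        (if (i : ℕ) < n - s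
         then fun _ : Fin 2 => (1 : ℂ) / Real.sqrt 2
         else fun b : Fin 2 => if (b : ℕ) = (l / 2^(n-1-(i : ℕ))) % 2 then 1 else 0)
          (bit n i x)
        = if (i : ℕ) < n - s then (1 : ℂ) / Real.sqrt 2
          else (if ((bit n i x : ℕ)) = (l / 2^(n-1-(i : ℕ))) % 2 then 1 else 0) := by
      intro i
      by_cases h : (i : ℕ) < n - s <;> simp [h]
    rw [Finset.prod_congr rfl (fun i _ => this i), Finset.prod_ite, Finset.prod_const,
      Finset.prod_boole]
    have hcard : (Finset.filter (fun i : Fin n => (i:ℕ) < n - s) Finset.univ).card = n - s := by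
      rw [show n - s = (Finset.range (n-s)).card from (Finset.card_range _).symm]
      apply Finset.card_bij (fun (a : Fin n) _ => (a : ℕ))
      · intro a ha
        simp only [Finset.mem_filter] at ha
        simpa using ha.2
      · intro a _ b _ hab
        exact Fin.val_injective hab
      · intro b hb
        simp only [Finset.mem_range] at hb
        exact ⟨⟨b, by omega⟩, by simp [hb], rfl⟩
    rw [hcard]
    congr 1
    simp
  rw [hprod]
  have hbits : (∀ i : Fin n, ¬((i:ℕ) < n - s) →
      ((bit n i x : ℕ) = (l / 2^(n-1-(i : ℕ))) % 2)) ↔ (x : ℕ) % 2^s = l := by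
    rw [mod_eq_iff_bits s l x hl]
    constructor
    · intro h j hj
      have hi : n - 1 - j < n := by omega
      have hexp : n - 1 - (n - 1 - j) = j := by omega
      have h2 := h ⟨n - 1 - j, hi⟩ (show ¬(n - 1 - j < n - s) by omega)
      simp only [bit, Fin.val_mk] at h2
      rw [hexp] at h2
      exact h2
    · intro h i hi
      have hilt := i.isLt
      simp only [bit, Fin.val_mk]
      exact h (n - 1 - (i:ℕ)) (by omega)
  rw [if_congr hbits rfl rfl]
  have hpow : ((1 : ℂ) / Real.sqrt 2)^(n-s) = (1 : ℂ) / Real.sqrt (2^(n-s)) := by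
    rw [div_pow, one_pow, sqrt_two_pow]
    push_cast
    ring
  rw [hpow]
  by_cases h : (x : ℕ) % 2^s = l <;> simp [h]
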